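/- For every nonnegative integer n, the coefficient of U_0 in the expansion of U_1(t)^n in the basis of Chebyshev polynomials of the second kind equals 0 if n is odd, and equals n!/((n/2)! (n/2+1)!) if n is even. -/

import Mathlib

open Polynomial Polynomial.Chebyshev

lemma U_eval_aux' (t z : ℝ) (ht : 2 * t * z = z ^ 2 + 1) (j : ℕ) :
    (U ℝ j).eval t * (z ^ 2 - 1) * z ^ j = z ^ (2 * j + 2) - 1 := by
  induction j using Nat.twoStepInduction with
  | zero => simp [U_zero]
  | one =>
    simp only [Nat.cast_one, U_one, eval_mul, eval_ofNat, eval_X]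
    linear_combination (z ^ 2 - 1) * ht
  | more j ih1 ih2 =>
    have h2 : (U ℝ ((j:ℤ)+1)).eval t * (z ^ 2 - 1) * z ^ (j+1)
        = z ^ (2 * (j+1) + 2) - 1 := by push_cast at ih2 ⊢; exact ih2
    have hr := U_add_two ℝ (j : ℤ)
    push_cast
    rw [show ((j:ℤ) + 2) = (j:ℤ) + 2 from rfl, hr]
    simp only [eval_sub, eval_mul, eval_ofNat, eval_X]
    linear_combination (z^2+1) * h2 - z^2 * ih1 +
      ((U ℝ ((j:ℤ)+1)).eval t * (z^2-1) * z^(j+1)) * ht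

lemma coeffQ' (n m : ℕ) :
    ((((X:ℝ[X])^2+1)^n)).coeff m
      = if m % 2 = 0 ∧ m / 2 ≤ n then (n.choose (m/2) : ℝ) else 0 := by
  rw [add_pow, finset_sum_coeff]
  simp only [one_pow, mul_one, ← pow_mul, coeff_mul_natCast, coeff_X_pow,
    ite_mul, one_mul, zero_mul]
  rw [Finset.sum_eq_single (m/2)]
  · split_ifs with h1 h2
    · rfl
    · rw [Nat.choose_eq_zero_of_lt (by omega), Nat.cast_zero]
    · exfalso; omega
    · rfl
  · intro k hk hne; rw [if_neg (by omega)]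
  · intro h
    simp only [Finset.mem_range, not_lt] at h
    split_ifs with hc
    · rw [Nat.choose_eq_zero_of_lt (by omega), Nat.cast_zero]
    · rfl

lemma catalan_arith (k : ℕ) :
    (((2*k+2).choose (k+1) : ℝ)) - ((2*k+2).choose k : ℝ)
      = ((2*k+2).factorial : ℝ) / ((k+1).factorial * (k+2).factorial) := by
  rw [Nat.cast_choose ℝ (by omega : k+1 ≤ 2*k+2),
      Nat.cast_choose ℝ (by omega : k ≤ 2*k+2)]
  have e1 : 2*k+2 - (k+1) = k+1 := by omega
  have e2 : 2*k+2 - k = k+2 := by omega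
  rw [e1, e2]
  have f1 : ((k+1).factorial : ℝ) = (k+1) * k.factorial := by
    rw [Nat.factorial_succ]; push_cast; ring
  have f2 : ((k+2).factorial : ℝ) = (k+2) * (k+1).factorial := by
    rw [Nat.factorial_succ (k+1)]; push_cast; ring
  have p0 : (k.factorial : ℝ) > 0 := by positivity
  have p1 : ((k+1).factorial : ℝ) > 0 := by positivity
  have p2 : ((k+2).factorial : ℝ) > 0 := by positivity
  rw [f2, f1]
  field_simp
  ring

/-- The coefficient of `U 0` in the expansion of `(U 1)^n` in the basis of
Chebyshev polynomials of the second kind is `0` for odd `n` and the Catalan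
number `n!/((n/2)!(n/2+1)!)` for even `n`. -/
theorem chebyshev_U_one_pow_coeff_zero (n : ℕ) (a : ℕ → ℝ)
    (ha : ∀ t : ℝ, (U ℝ 1).eval t ^ n =
      ∑ j ∈ Finset.range (n + 1), a j * (U ℝ j).eval t) :
    a 0 = if Odd n then 0
      else (Nat.factorial n : ℝ) /
        (Nat.factorial (n / 2) * Nat.factorial (n / 2 + 1)) := by
  have key : ∀ z : ℝ, z ≠ 0 →
      ((z^2+1)^n * (z^2-1) : ℝ)
        = ∑ j ∈ Finset.range (n+1), a j * (z^(n+j+2) - z^(n-j)) := by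
    intro z hz
    set t : ℝ := (z^2+1)/(2*z) with htdef
    have ht : 2 * t * z = z^2 + 1 := by rw [htdef]; field_simp
    have h1 := ha t
    rw [U_one] at h1
    simp only [eval_mul, eval_ofNat, eval_X] at h1
    calc (z^2+1)^n * (z^2-1)
        = (2*t)^n * ((z^2-1) * z^n) := by
          rw [← ht, mul_pow]; ring
      _ = (∑ j ∈ Finset.range (n+1), a j * (U ℝ j).eval t) * ((z^2-1)*z^n) := by
          rw [h1]
      _ = ∑ j ∈ Finset.range (n+1), a j * (z^(n+j+2) - z^(n-j)) := by
          rw [Finset.sum_mul]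
          refine Finset.sum_congr rfl fun j hj => ?_
          have hj' : j ≤ n := by
            simp only [Finset.mem_range] at hj; omega
          have hz' : z^n = z^j * z^(n-j) := by
            rw [← pow_add]; congr 1; omega
          calc a j * (U ℝ j).eval t * ((z^2-1)*z^n)
              = a j * (((U ℝ j).eval t * (z^2-1) * z^j) * z^(n-j)) := by
                rw [hz']; ring
            _ = a j * ((z^(2*j+2) - 1) * z^(n-j)) := by
                rw [U_eval_aux' t z ht j]
            _ = a j * (z^(n+j+2) - z^(n-j)) := by
                rw [sub_mul, one_mul, ← pow_add]
                congr 3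
                omega
  have hpoly : (((X:ℝ[X])^2+1)^n * (X^2-1))
      = ∑ j ∈ Finset.range (n+1), C (a j) * (X^(n+j+2) - X^(n-j)) := by
    apply Polynomial.eq_of_infinite_eval_eq
    apply Set.Infinite.mono (s := ({(0:ℝ)}ᶜ : Set ℝ))
    · intro z hz
      have hz' : z ≠ 0 := hz
      simp only [Set.mem_setOf_eq, eval_mul, eval_pow, eval_add, eval_sub,
        eval_X, eval_one, eval_finset_sum, eval_C]
      exact key z hz'
    · exact (Set.finite_singleton (0:ℝ)).infinite_compl
  have hc := congrArg (fun p => Polynomial.coeff p n) hpoly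
  rw [mul_sub, mul_one, coeff_sub, finset_sum_coeff] at hc
  have hXsq : (((X:ℝ[X])^2+1)^n * X^2).coeff n
      = if 2 ≤ n then ((((X:ℝ[X])^2+1)^n)).coeff (n-2) else 0 := by
    rw [coeff_mul_X_pow']
  rw [hXsq] at hc
  have hsum : (∑ j ∈ Finset.range (n+1),
      (C (a j) * ((X:ℝ[X])^(n+j+2) - X^(n-j))).coeff n) = -(a 0) := by
    rw [Finset.sum_eq_single 0]
    · simp only [coeff_C_mul, coeff_sub, coeff_X_pow]
      rw [if_neg (by omega), if_pos (by omega)]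
      ring
    · intro j hj hne
      simp only [Finset.mem_range] at hj
      simp only [coeff_C_mul, coeff_sub, coeff_X_pow]
      rw [if_neg (by omega), if_neg (by omega)]
      ring
    · intro h
      exact absurd (Finset.mem_range.mpr (by omega)) h
  rw [hsum, coeffQ', coeffQ'] at hc
  rcases Nat.even_or_odd n with he | ho
  · rw [if_neg (by simpa using he)]
    obtain ⟨m, hm⟩ := he
    rcases Nat.eq_zero_or_pos m with rfl | hmpos
    · -- n = 0
      subst hm
      simp only [show (0:ℕ) % 2 = 0 from rfl] at hc
      norm_num at hc ⊢
      linarith [hc]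
    · obtain ⟨k, rfl⟩ := Nat.exists_eq_succ_of_ne_zero (by omega : m ≠ 0)
      have hn : n = 2*k+2 := by omega
      subst hn
      have d1 : (2*k+2) % 2 = 0 := by omega
      have d2 : (2*k+2) / 2 = k+1 := by omega
      have d3 : (2*k+2-2) % 2 = 0 := by omega
      have d4 : (2*k+2-2) / 2 = k := by omega
      rw [if_pos (by omega : 2 ≤ 2*k+2)] at hc
      rw [d1, d2, d3, d4] at hc
      rw [if_pos ⟨rfl, by omega⟩, if_pos ⟨rfl, by omega⟩] at hc
      have := catalan_arith k
      rw [d2]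
      push_cast at this hc ⊢
      linarith [this, hc]
  · rw [if_pos ho]
    have h1 : n % 2 = 1 := Nat.odd_iff.mp ho
    split_ifs at hc <;> first | linarith | (exfalso; omega)
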